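/- Let p ≥ 0 and c ∈ C(I) with min_I c > −(π/(b−a))⁴ − p(π/(b−a))². Then the homogeneous problem u⁗ − p u'' + c u = 0 on I with u(a)=u(b)=u''(a)=u''(b)=0 has only the trivial solution u ≡ 0 among C⁴(I) functions. -/

import Mathlib

open Real Set intervalIntegral MeasureTheory Filter Topology

lemma lim_div_sin : Tendsto (fun x : ℝ => x / Real.sin x) (𝓝[≠] (0:ℝ)) (𝓝 1) := by
  have h := (Real.hasDerivAt_sin 0)
  rw [hasDerivAt_iff_tendsto_slope] at h
  have hs : slope Real.sin 0 = fun x => Real.sin x / x := by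
    funext x; simp [slope_def_field]
  rw [hs, Real.cos_zero] at h
  have := h.inv₀ (by norm_num)
  simpa [inv_div] using this

lemma wirtinger {a b : ℝ} (hab : a < b) (f : ℝ → ℝ) (hf : ContDiff ℝ 1 f)
    (ha : f a = 0) (hb : f b = 0) :
    (π / (b - a)) ^ 2 * ∫ t in a..b, f t ^ 2 ≤ ∫ t in a..b, deriv f t ^ 2 := by
  set k := π / (b - a) with hk_def
  have hba : (0:ℝ) < b - a := by linarith
  have hk : 0 < k := div_pos Real.pi_pos hba
  have hkb : k * (b - a) = π := by rw [hk_def]; field_simp [hba.ne']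
  have hfd : Differentiable ℝ f := hf.differentiable one_ne_zero
  have hf'c : Continuous (deriv f) := hf.continuous_deriv le_rfl
  have hfc : Continuous f := hfd.continuous
  set g : ℝ → ℝ := fun t => deriv f t ^ 2 - k ^ 2 * f t ^ 2 with hg_def
  have hgc : Continuous g := by
    exact (hf'c.pow 2).sub (continuous_const.mul (hfc.pow 2))
  set H : ℝ → ℝ := fun t =>
    k * f t ^ 2 * (Real.cos (k * (t - a)) / Real.sin (k * (t - a))) with hH_def
  have hHa : H a = 0 := by simp [hH_def, ha]
  have hHb : H b = 0 := by simp [hH_def, hb]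
  have hsin : ∀ t ∈ Ioo a b, 0 < Real.sin (k * (t - a)) := by
    intro t ht
    apply Real.sin_pos_of_pos_of_lt_pi
    · exact mul_pos hk (by linarith [ht.1])
    · calc k * (t - a) < k * (b - a) := by
            apply mul_lt_mul_of_pos_left (by linarith [ht.2]) hk
        _ = π := hkb
  -- derivative of H on the interior
  have hder : ∀ t ∈ Ioo a b, HasDerivAt H
      (g t - (deriv f t - k * f t *
        (Real.cos (k * (t - a)) / Real.sin (k * (t - a)))) ^ 2) t := by
    intro t ht
    have hs := hsin t ht
    have hsne : Real.sin (k * (t - a)) ≠ 0 := ne_of_gt hs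
    have hθ : HasDerivAt (fun t : ℝ => k * (t - a)) k t := by
      simpa using ((hasDerivAt_id t).sub_const a).const_mul k
    have hcos : HasDerivAt (fun t : ℝ => Real.cos (k * (t - a)))
        (-Real.sin (k * (t - a)) * k) t :=
      (Real.hasDerivAt_cos _).comp t hθ
    have hsinD : HasDerivAt (fun t : ℝ => Real.sin (k * (t - a)))
        (Real.cos (k * (t - a)) * k) t :=
      (Real.hasDerivAt_sin _).comp t hθ
    have hq : HasDerivAt (fun t : ℝ =>
        Real.cos (k * (t - a)) / Real.sin (k * (t - a)))
        ((-Real.sin (k * (t - a)) * k * Real.sin (k * (t - a)) -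
          Real.cos (k * (t - a)) * (Real.cos (k * (t - a)) * k)) /
          Real.sin (k * (t - a)) ^ 2) t := hcos.div hsinD hsne
    have hf2 : HasDerivAt (fun t : ℝ => k * f t ^ 2)
        (k * (2 * f t * deriv f t)) t := by
      have := ((hfd t).hasDerivAt.pow 2).const_mul k
      simpa [mul_comm, mul_assoc, mul_left_comm] using this
    have hH' := hf2.mul hq
    refine hH'.congr_deriv ?_
    have pyth := Real.sin_sq_add_cos_sq (k * (t - a))
    set s := Real.sin (k * (t - a))
    set cc := Real.cos (k * (t - a))
    rw [hg_def]
    field_simp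
    ring_nf

  -- continuity of H on the closed interval
  have slope_a : Tendsto (fun t => f t / (t - a)) (𝓝[≠] a) (𝓝 (deriv f a)) := by
    have h := (hfd a).hasDerivAt
    rw [hasDerivAt_iff_tendsto_slope] at h
    have hs : slope f a = fun t => f t / (t - a) := by
      funext t; simp [slope_def_field, ha]
    rwa [hs] at h
  have slope_b : Tendsto (fun t => f t / (t - b)) (𝓝[≠] b) (𝓝 (deriv f b)) := by
    have h := (hfd b).hasDerivAt
    rw [hasDerivAt_iff_tendsto_slope] at h
    have hs : slope f b = fun t => f t / (t - b) := by
      funext t; simp [slope_def_field, hb]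
    rwa [hs] at h
  have hmapa : Tendsto (fun t => k * (t - a)) (𝓝[Ioc a b] a) (𝓝[≠] (0:ℝ)) := by
    apply tendsto_nhdsWithin_of_tendsto_nhds_of_eventually_within
    · have : Tendsto (fun t : ℝ => k * (t - a)) (𝓝 a) (𝓝 (k * (a - a))) :=
        ((continuous_const.mul (continuous_id.sub continuous_const)).tendsto a)
      simpa using this.mono_left nhdsWithin_le_nhds
    · filter_upwards [self_mem_nhdsWithin] with t ht
      simp only [mem_compl_iff, mem_singleton_iff]
      exact ne_of_gt (mul_pos hk (by linarith [ht.1]))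
  have hmapb : Tendsto (fun t => k * (t - b)) (𝓝[Ico a b] b) (𝓝[≠] (0:ℝ)) := by
    apply tendsto_nhdsWithin_of_tendsto_nhds_of_eventually_within
    · have : Tendsto (fun t : ℝ => k * (t - b)) (𝓝 b) (𝓝 (k * (b - b))) :=
        ((continuous_const.mul (continuous_id.sub continuous_const)).tendsto b)
      simpa using this.mono_left nhdsWithin_le_nhds
    · filter_upwards [self_mem_nhdsWithin] with t ht
      simp only [mem_compl_iff, mem_singleton_iff]
      exact ne_of_lt (mul_neg_of_pos_of_neg hk (by linarith [ht.2]))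
  have hdiva : Tendsto (fun t => (t - a) / Real.sin (k * (t - a)))
      (𝓝[Ioc a b] a) (𝓝 (1 / k)) := by
    have comp := lim_div_sin.comp hmapa
    have comp2 := comp.const_mul (1 / k)
    have heq : ∀ t : ℝ, (1 / k) * ((fun x : ℝ => x / Real.sin x) (k * (t - a)))
        = (t - a) / Real.sin (k * (t - a)) := by
      intro t
      show 1 / k * (k * (t - a) / Real.sin (k * (t - a)))
          = (t - a) / Real.sin (k * (t - a))
      have : (1 / k) * (k * (t - a)) = t - a := by field_simp
      rw [div_eq_mul_inv (k * (t - a)), ← mul_assoc, this, div_eq_mul_inv]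
    have := comp2.congr heq
    simpa using this
  have hdivb : Tendsto (fun t => (t - b) / Real.sin (k * (t - a)))
      (𝓝[Ico a b] b) (𝓝 (-(1 / k))) := by
    have comp := lim_div_sin.comp hmapb
    have comp2 := comp.const_mul (-(1 / k))
    have hsin_eq : ∀ t : ℝ, Real.sin (k * (t - a)) = -Real.sin (k * (t - b)) := by
      intro t
      have : k * (t - a) = k * (t - b) + π := by
        rw [← hkb]; ring
      rw [this, Real.sin_add_pi]
    have heq : ∀ t : ℝ, (-(1 / k)) * ((fun x : ℝ => x / Real.sin x) (k * (t - b)))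
        = (t - b) / Real.sin (k * (t - a)) := by
      intro t
      show (-(1 / k)) * (k * (t - b) / Real.sin (k * (t - b)))
          = (t - b) / Real.sin (k * (t - a))
      rw [hsin_eq t]
      simp only [div_neg]
      have : (1 / k) * (k * (t - b)) = t - b := by field_simp
      rw [div_eq_mul_inv (k * (t - b)), neg_mul, ← mul_assoc, this, div_eq_mul_inv]
    have := comp2.congr heq
    simpa using this
  have hconta : ContinuousWithinAt H (Icc a b) a := by
    rw [← continuousWithinAt_diff_self, Icc_diff_left, ContinuousWithinAt, hHa]
    have l1 : Tendsto (fun t => k * Real.cos (k * (t - a))) (𝓝[Ioc a b] a)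
        (𝓝 (k * Real.cos (k * (a - a)))) :=
      ((continuous_const.mul ((Real.continuous_cos.comp
        (continuous_const.mul (continuous_id.sub continuous_const))))).tendsto a).mono_left
        nhdsWithin_le_nhds
    have l2 : Tendsto (fun t => (f t / (t - a)) ^ 2) (𝓝[Ioc a b] a)
        (𝓝 ((deriv f a) ^ 2)) :=
      (slope_a.mono_left (nhdsWithin_mono a (fun t ht => ne_of_gt ht.1))).pow 2
    have l3 : Tendsto (fun t : ℝ => t - a) (𝓝[Ioc a b] a) (𝓝 0) := by
      have : Tendsto (fun t : ℝ => t - a) (𝓝 a) (𝓝 (a - a)) :=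
        ((continuous_id.sub continuous_const).tendsto a)
      simpa using this.mono_left nhdsWithin_le_nhds
    have key := l1.mul (l2.mul (l3.mul hdiva))
    have key2 : Tendsto (fun t => k * Real.cos (k * (t - a)) *
        ((f t / (t - a)) ^ 2 * ((t - a) * ((t - a) / Real.sin (k * (t - a))))))
        (𝓝[Ioc a b] a) (𝓝 0) := by simpa using key
    refine key2.congr' ?_
    filter_upwards [self_mem_nhdsWithin] with t ht
    by_cases hsne : Real.sin (k * (t - a)) = 0
    · simp [hH_def, hsne]
    · have hta : t - a ≠ 0 := ne_of_gt (by linarith [ht.1])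
      simp only [hH_def]
      field_simp
  have hcontb : ContinuousWithinAt H (Icc a b) b := by
    rw [← continuousWithinAt_diff_self, Icc_sdiff_right, ContinuousWithinAt, hHb]
    have l1 : Tendsto (fun t => k * Real.cos (k * (t - a))) (𝓝[Ico a b] b)
        (𝓝 (k * Real.cos (k * (b - a)))) :=
      ((continuous_const.mul ((Real.continuous_cos.comp
        (continuous_const.mul (continuous_id.sub continuous_const))))).tendsto b).mono_left
        nhdsWithin_le_nhds
    have l2 : Tendsto (fun t => (f t / (t - b)) ^ 2) (𝓝[Ico a b] b)
        (𝓝 ((deriv f b) ^ 2)) :=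
      (slope_b.mono_left (nhdsWithin_mono b (fun t ht => ne_of_lt ht.2))).pow 2
    have l3 : Tendsto (fun t : ℝ => t - b) (𝓝[Ico a b] b) (𝓝 0) := by
      have : Tendsto (fun t : ℝ => t - b) (𝓝 b) (𝓝 (b - b)) :=
        ((continuous_id.sub continuous_const).tendsto b)
      simpa using this.mono_left nhdsWithin_le_nhds
    have key := l1.mul (l2.mul (l3.mul hdivb))
    have key2 : Tendsto (fun t => k * Real.cos (k * (t - a)) *
        ((f t / (t - b)) ^ 2 * ((t - b) * ((t - b) / Real.sin (k * (t - a))))))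
        (𝓝[Ico a b] b) (𝓝 0) := by simpa using key
    refine key2.congr' ?_
    filter_upwards [self_mem_nhdsWithin] with t ht
    by_cases hsne : Real.sin (k * (t - a)) = 0
    · simp [hH_def, hsne]
    · have htb : t - b ≠ 0 := ne_of_lt (by linarith [ht.2])
      simp only [hH_def]
      field_simp
  have hHcont : ContinuousOn H (Icc a b) := by
    intro x hx
    rcases eq_or_lt_of_le hx.1 with h1 | h1
    · subst h1; exact hconta
    rcases eq_or_lt_of_le hx.2 with h2 | h2
    · subst h2; exact hcontb
    · have hsne : Real.sin (k * (x - a)) ≠ 0 := ne_of_gt (hsin x ⟨h1, h2⟩)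
      apply ContinuousAt.continuousWithinAt
      apply ContinuousAt.mul
      · exact (continuous_const.mul (hfc.pow 2)).continuousAt
      · apply ContinuousAt.div
        · exact (Real.continuous_cos.comp
            (continuous_const.mul (continuous_id.sub continuous_const))).continuousAt
        · exact (Real.continuous_sin.comp
            (continuous_const.mul (continuous_id.sub continuous_const))).continuousAt
        · exact hsne
  -- the primitive of g
  set G : ℝ → ℝ := fun t => ∫ x in a..t, g x with hG_def
  have hGd : ∀ t : ℝ, HasDerivAt G (g t) t := by
    intro t
    exact intervalIntegral.integral_hasDerivAt_right
      (hgc.intervalIntegrable a t)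
      (hgc.stronglyMeasurableAtFilter _ _) hgc.continuousAt
  set Φ : ℝ → ℝ := fun t => G t - H t with hΦ_def
  have hΦmono : MonotoneOn Φ (Icc a b) := by
    apply monotoneOn_of_deriv_nonneg (convex_Icc a b)
    · have hGc : ContinuousOn G (Icc a b) :=
        fun t _ => (hGd t).continuousAt.continuousWithinAt
      exact hGc.sub hHcont
    · rw [interior_Icc]
      intro t ht
      exact ((hGd t).sub (hder t ht)).differentiableAt.differentiableWithinAt
    · rw [interior_Icc]
      intro t ht
      have hd := (hGd t).sub (hder t ht)
      rw [show Φ = G - H from rfl, hd.deriv]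
      have : g t - (g t - (deriv f t - k * f t *
          (Real.cos (k * (t - a)) / Real.sin (k * (t - a)))) ^ 2)
          = (deriv f t - k * f t *
          (Real.cos (k * (t - a)) / Real.sin (k * (t - a)))) ^ 2 := by ring
      rw [this]
      positivity
  have hineq := hΦmono ⟨le_refl a, le_of_lt hab⟩ ⟨le_of_lt hab, le_refl b⟩ (le_of_lt hab)
  have hGa : G a = 0 := by simp [hG_def]
  have hint : (0:ℝ) ≤ ∫ t in a..b, g t := by
    have : Φ a = 0 := by simp [hΦ_def, hGa, hHa]
    have hb' : Φ b = G b := by simp [hΦ_def, hHb]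
    rw [this, hb'] at hineq
    exact hineq
  have hsplit : ∫ t in a..b, g t
      = (∫ t in a..b, deriv f t ^ 2) - k ^ 2 * ∫ t in a..b, f t ^ 2 := by
    rw [hg_def]
    rw [intervalIntegral.integral_sub (show IntervalIntegrable (fun t => deriv f t ^ 2) volume a b from (hf'c.pow 2).intervalIntegrable a b)
      (show IntervalIntegrable (fun t => k ^ 2 * f t ^ 2) volume a b from (continuous_const.mul (hfc.pow 2)).intervalIntegrable a b)]
    rw [intervalIntegral.integral_const_mul]
  rw [hsplit] at hint
  linarith

/-- If `min_I c > -(π/(b-a))⁴ - p(π/(b-a))²`, the homogeneous simply supported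
beam problem `u⁗ - p u'' + c u = 0`, `u(a)=u(b)=u''(a)=u''(b)=0`, has only the
trivial solution. -/
theorem stmt_11 (a b p : ℝ) (hab : a < b) (hp : 0 ≤ p) (c : ℝ → ℝ)
    (hc : ContinuousOn c (Set.Icc a b))
    (hcmin : ∀ t ∈ Set.Icc a b,
      -(π / (b - a)) ^ 4 - p * (π / (b - a)) ^ 2 < c t)
    (u : ℝ → ℝ) (hu : ContDiff ℝ 4 u)
    (heq : ∀ t ∈ Set.Icc a b,
      iteratedDeriv 4 u t - p * iteratedDeriv 2 u t + c t * u t = 0)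
    (hua : u a = 0) (hub : u b = 0)
    (hua'' : iteratedDeriv 2 u a = 0) (hub'' : iteratedDeriv 2 u b = 0) :
    ∀ t ∈ Set.Icc a b, u t = 0 := by
  by_contra hcon
  push_neg at hcon
  obtain ⟨t1, ht1, hne⟩ := hcon
  set k := π / (b - a) with hk_def
  have hba : (0:ℝ) < b - a := by linarith
  have hk : 0 < k := div_pos Real.pi_pos hba
  -- smoothness chain
  have hstep : ∀ (n : ℕ) (f : ℝ → ℝ), ContDiff ℝ ((n+1 : ℕ) : WithTop ℕ∞) f →
      Differentiable ℝ f ∧ ContDiff ℝ ((n : ℕ) : WithTop ℕ∞) (deriv f) := by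
    intro n f h
    rw [show (((n+1:ℕ)) : WithTop ℕ∞) = ((n : ℕ) : WithTop ℕ∞) + 1 by push_cast; rfl] at h
    have := contDiff_succ_iff_deriv.mp h
    exact ⟨this.1, this.2.2⟩
  have hu4 : ContDiff ℝ ((4:ℕ) : WithTop ℕ∞) u := by exact_mod_cast hu
  have s0 := hstep 3 u hu4
  have s1 := hstep 2 (deriv u) s0.2
  have s2 := hstep 1 (deriv (deriv u)) s1.2
  have s3 := hstep 0 (deriv (deriv (deriv u))) s2.2
  set u1 := deriv u with hu1_def
  set u2 := deriv u1 with hu2_def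
  set u3 := deriv u2 with hu3_def
  set u4 := deriv u3 with hu4_def
  have cu : Continuous u := s0.1.continuous
  have cu1 : Continuous u1 := s1.1.continuous
  have cu2 : Continuous u2 := s2.1.continuous
  have cu3 : Continuous u3 := s3.1.continuous
  have cu4 : Continuous u4 := s3.2.continuous
  -- identify iterated derivatives
  have e2 : iteratedDeriv 2 u = u2 := by
    rw [show (2:ℕ) = 1+1 from rfl, iteratedDeriv_succ, iteratedDeriv_one]
  have e3 : iteratedDeriv 3 u = u3 := by
    rw [show (3:ℕ) = 2+1 from rfl, iteratedDeriv_succ, e2]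
  have e4 : iteratedDeriv 4 u = u4 := by
    rw [show (4:ℕ) = 3+1 from rfl, iteratedDeriv_succ, e3]
  have hu2a : u2 a = 0 := by rw [← e2]; exact hua''
  have hu2b : u2 b = 0 := by rw [← e2]; exact hub''
  -- derivative facts
  have d0 : ∀ x ∈ Set.uIcc a b, HasDerivAt u (u1 x) x := fun x _ => (s0.1 x).hasDerivAt
  have d1 : ∀ x ∈ Set.uIcc a b, HasDerivAt u1 (u2 x) x := fun x _ => (s1.1 x).hasDerivAt
  have d2 : ∀ x ∈ Set.uIcc a b, HasDerivAt u2 (u3 x) x := fun x _ => (s2.1 x).hasDerivAt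
  have d3 : ∀ x ∈ Set.uIcc a b, HasDerivAt u3 (u4 x) x := fun x _ => (s3.1 x).hasDerivAt
  -- integration by parts
  have ibp1 : ∫ x in a..b, (u4 x * u x + u3 x * u1 x) = 0 := by
    have := intervalIntegral.integral_deriv_mul_eq_sub d3 d0
      ((cu4).intervalIntegrable a b) ((cu1).intervalIntegrable a b)
    rw [this, hua, hub]; ring
  have ibp2 : ∫ x in a..b, (u3 x * u1 x + u2 x * u2 x) = 0 := by
    have := intervalIntegral.integral_deriv_mul_eq_sub d2 d1
      ((cu3).intervalIntegrable a b) ((cu2).intervalIntegrable a b)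
    rw [this, hu2a, hu2b]; ring
  have ibp3 : ∫ x in a..b, (u2 x * u x + u1 x * u1 x) = 0 := by
    have := intervalIntegral.integral_deriv_mul_eq_sub d1 d0
      ((cu2).intervalIntegrable a b) ((cu1).intervalIntegrable a b)
    rw [this, hua, hub]; ring
  set A := ∫ t in a..b, u2 t ^ 2 with hA_def
  set B := ∫ t in a..b, u1 t ^ 2 with hB_def
  set C := ∫ t in a..b, u t ^ 2 with hC_def
  set D := ∫ t in a..b, c t * u t ^ 2 with hD_def
  have hiA : IntervalIntegrable (fun t => u2 t ^ 2) MeasureTheory.volume a b :=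
    ((cu2.pow 2)).intervalIntegrable a b
  have hiB : IntervalIntegrable (fun t => u1 t ^ 2) MeasureTheory.volume a b :=
    ((cu1.pow 2)).intervalIntegrable a b
  have hiC : IntervalIntegrable (fun t => u t ^ 2) MeasureTheory.volume a b :=
    ((cu.pow 2)).intervalIntegrable a b
  have hiD : IntervalIntegrable (fun t => c t * u t ^ 2) MeasureTheory.volume a b := by
    apply ContinuousOn.intervalIntegrable
    rw [Set.uIcc_of_le hab.le]
    exact hc.mul ((cu.pow 2).continuousOn)
  have hi31 : IntervalIntegrable (fun x => u3 x * u1 x) MeasureTheory.volume a b :=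
    (cu3.mul cu1).intervalIntegrable a b
  have hi4u : IntervalIntegrable (fun x => u4 x * u x) MeasureTheory.volume a b :=
    (cu4.mul cu).intervalIntegrable a b
  have hi2u : IntervalIntegrable (fun x => u2 x * u x) MeasureTheory.volume a b :=
    (cu2.mul cu).intervalIntegrable a b
  -- ∫ u4 u = A
  have hI4 : ∫ x in a..b, u4 x * u x = A := by
    have h1 : (∫ x in a..b, u4 x * u x) + ∫ x in a..b, u3 x * u1 x = 0 := by
      rw [← intervalIntegral.integral_add hi4u hi31]; exact ibp1
    have h2 : (∫ x in a..b, u3 x * u1 x) + ∫ x in a..b, u2 x * u2 x = 0 := by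
      rw [← intervalIntegral.integral_add hi31 (show IntervalIntegrable (fun x => u2 x * u2 x) MeasureTheory.volume a b from (cu2.mul cu2).intervalIntegrable a b)]
      exact ibp2
    have h3 : (∫ x in a..b, u2 x * u2 x) = A := by
      rw [hA_def]; exact intervalIntegral.integral_congr (fun x _ => by ring)
    linarith
  -- ∫ u2 u = -B
  have hI2 : ∫ x in a..b, u2 x * u x = -B := by
    have h1 : (∫ x in a..b, u2 x * u x) + ∫ x in a..b, u1 x * u1 x = 0 := by
      rw [← intervalIntegral.integral_add hi2u (show IntervalIntegrable (fun x => u1 x * u1 x) MeasureTheory.volume a b from (cu1.mul cu1).intervalIntegrable a b)]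
      exact ibp3
    have h3 : (∫ x in a..b, u1 x * u1 x) = B := by
      rw [hB_def]; exact intervalIntegral.integral_congr (fun x _ => by ring)
    linarith
  -- energy identity
  have energy : A + p * B + D = 0 := by
    have hz : ∫ t in a..b,
        (u4 t * u t - p * (u2 t * u t) + c t * u t ^ 2) = 0 := by
      rw [intervalIntegral.integral_congr (g := fun _ => (0:ℝ))
        (fun t ht => by
          rw [Set.uIcc_of_le hab.le] at ht
          have := heq t ht
          rw [e2, e4] at this
          simp only [Pi.zero_apply]
          linear_combination this * u t)]
      simp
    rw [intervalIntegral.integral_add (hi4u.sub (hi2u.const_mul p)) hiD,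
      intervalIntegral.integral_sub hi4u (hi2u.const_mul p),
      intervalIntegral.integral_const_mul, hI4, hI2] at hz
    rw [← hD_def] at hz
    linarith
  -- minimum of c
  obtain ⟨t0, ht0, hmin⟩ := isCompact_Icc.exists_isMinOn
    (Set.nonempty_Icc.mpr hab.le) hc
  set m := c t0 with hm_def
  have hmgt : -k ^ 4 - p * k ^ 2 < m := hcmin t0 ht0
  have hmD : m * C ≤ D := by
    rw [hC_def, hD_def, ← intervalIntegral.integral_const_mul]
    apply intervalIntegral.integral_mono_on hab.le (hiC.const_mul m) hiD
    intro x hx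
    exact mul_le_mul_of_nonneg_right (hmin hx) (sq_nonneg _)
  -- C > 0
  have hCpos : 0 < C := by
    have ht1' : t1 ∈ Set.Ioo a b := by
      rcases eq_or_lt_of_le ht1.1 with h | h
      · exact absurd (h ▸ hua) hne
      rcases eq_or_lt_of_le ht1.2 with h' | h'
      · exact absurd (h' ▸ hub) hne
      · exact ⟨h, h'⟩
    rw [hC_def, intervalIntegral.integral_of_le hab.le]
    rw [MeasureTheory.setIntegral_pos_iff_support_of_nonneg_ae
      (Filter.Eventually.of_forall (fun x => sq_nonneg (u x)))
      ((cu.pow 2).integrableOn_Ioc)]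
    have hV : IsOpen ({t : ℝ | u t ≠ 0} ∩ Set.Ioo a b) :=
      (isOpen_ne_fun cu continuous_const).inter isOpen_Ioo
    have hsub : ({t : ℝ | u t ≠ 0} ∩ Set.Ioo a b) ⊆
        Function.support (fun x => u x ^ 2) ∩ Set.Ioc a b := by
      rintro x ⟨hx1, hx2⟩
      exact ⟨pow_ne_zero 2 hx1, Set.Ioo_subset_Ioc_self hx2⟩
    calc (0:ENNReal) < MeasureTheory.volume ({t : ℝ | u t ≠ 0} ∩ Set.Ioo a b) :=
          hV.measure_pos _ ⟨t1, hne, ht1'⟩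
      _ ≤ _ := MeasureTheory.measure_mono hsub
  -- Wirtinger for u
  have hW : k ^ 2 * C ≤ B := by
    have := wirtinger hab u (hu.of_le (by exact_mod_cast (by norm_num : (1:ℕ) ≤ 4))) hua hub
    rw [← hk_def] at this
    exact this
  -- quadratic trick: ∀ l, 0 ≤ A - 2 l B + l² C
  have quad : ∀ l : ℝ, 0 ≤ A - 2 * l * B + l ^ 2 * C := by
    intro l
    have h0 : (0:ℝ) ≤ ∫ t in a..b, (u2 t + l * u t) ^ 2 :=
      intervalIntegral.integral_nonneg hab.le (fun t _ => sq_nonneg _)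
    have hexp : ∫ t in a..b, (u2 t + l * u t) ^ 2
        = A + 2 * l * (∫ x in a..b, u2 x * u x) + l ^ 2 * C := by
      have : (fun t => (u2 t + l * u t) ^ 2)
          = fun t => u2 t ^ 2 + (2 * l) * (u2 t * u t) + l ^ 2 * u t ^ 2 := by
        funext t; ring
      rw [this]
      rw [intervalIntegral.integral_add (hiA.add ((hi2u.const_mul (2*l))))
        (hiC.const_mul (l^2)),
        intervalIntegral.integral_add hiA (hi2u.const_mul (2*l)),
        intervalIntegral.integral_const_mul, intervalIntegral.integral_const_mul]
    rw [hexp, hI2] at h0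
    linarith
  -- conclude
  have hBpos : 0 < B := lt_of_lt_of_le (by positivity) hW
  have hCA : B ^ 2 ≤ C * A := by
    have hd := quad (B / C)
    have : A - 2 * (B / C) * B + (B / C) ^ 2 * C = A - B ^ 2 / C := by
      field_simp; ring
    rw [this] at hd
    rw [← sub_nonneg]
    calc (0:ℝ) ≤ (A - B ^ 2 / C) * C := mul_nonneg hd hCpos.le
      _ = C * A - B ^ 2 := by field_simp
  have hB2 : k ^ 4 * C ^ 2 ≤ B ^ 2 := by
    have h0 : (0:ℝ) ≤ k ^ 2 * C := by positivity
    have := mul_self_le_mul_self h0 hW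
    calc k ^ 4 * C ^ 2 = (k ^ 2 * C) * (k ^ 2 * C) := by ring
      _ ≤ B * B := this
      _ = B ^ 2 := by ring
  have hA : k ^ 4 * C ≤ A := by
    have h1 : C * (k ^ 4 * C) ≤ C * A := by
      calc C * (k ^ 4 * C) = k ^ 4 * C ^ 2 := by ring
        _ ≤ B ^ 2 := hB2
        _ ≤ C * A := hCA
    exact le_of_mul_le_mul_left h1 hCpos
  have hpB : p * (k ^ 2 * C) ≤ p * B := mul_le_mul_of_nonneg_left hW hp
  nlinarith [energy, hmD, hA, hpB, hCpos, hmgt]
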